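/- For all positive integers x, y, r, R, m, L and all i with 1 \leq i \leq L, the power series V(i) = q^{m(i-1)+y}(1-q^{(R-1)y})(1-q^x)(1-q^{m(i-1)+rx}) / [P(i) \cdot Q(L)/Q(i-1)] has nonnegative coefficients, where P(i) = (q^x,q^y,q^{rx+Ry};q^m)_i and Q(i) = (q^{rx},q^{Ry},q^{x+y};q^m)_i. -/

import Mathlib

open PowerSeries Finset

def NN (f : ℚ⟦X⟧) : Prop := ∀ n, 0 ≤ PowerSeries.coeff (R := ℚ) n f

lemma NN.mul {f g : ℚ⟦X⟧} (hf : NN f) (hg : NN g) : NN (f * g) := by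
  intro n
  rw [PowerSeries.coeff_mul]
  exact Finset.sum_nonneg fun p _ => mul_nonneg (hf p.1) (hg p.2)

lemma NN_X_pow (k : ℕ) : NN ((X : ℚ⟦X⟧) ^ k) := by
  intro n; rw [PowerSeries.coeff_X_pow]; split <;> norm_num

lemma NN_one : NN (1 : ℚ⟦X⟧) := by
  intro n; rw [← pow_zero (X : ℚ⟦X⟧)]; exact NN_X_pow 0 n

lemma const_one_sub (a : ℕ) (ha : 0 < a) :
    PowerSeries.constantCoeff (R := ℚ) (1 - (X : ℚ⟦X⟧) ^ a) = 1 := by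
  simp [map_sub, map_pow, zero_pow ha.ne']

lemma unit_cancel (a : ℕ) (ha : 0 < a) :
    (1 - (X : ℚ⟦X⟧) ^ a) * (1 - X ^ a)⁻¹ = 1 :=
  PowerSeries.mul_inv_cancel _ (by rw [const_one_sub a ha]; norm_num)

lemma inv_eq_mk (a : ℕ) (ha : 0 < a) :
    (1 - (X : ℚ⟦X⟧) ^ a)⁻¹ =
      PowerSeries.mk (fun n => if a ∣ n then (1 : ℚ) else 0) := by
  rw [eq_comm, PowerSeries.eq_inv_iff_mul_eq_one (by rw [const_one_sub a ha]; norm_num)]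
  ext n
  rw [mul_sub, mul_one, map_sub, PowerSeries.coeff_mul_X_pow', coeff_mk]
  rcases Nat.eq_zero_or_pos n with rfl | hn
  · have : ¬ a ≤ 0 := by omega
    simp [this, Nat.dvd_zero]
  · rw [PowerSeries.coeff_one, if_neg hn.ne']
    by_cases h : a ≤ n
    · rw [if_pos h, coeff_mk]
      have : a ∣ n ↔ a ∣ n - a := by
        constructor
        · intro hd; exact (Nat.dvd_sub hd dvd_rfl)
        · intro hd; have := Nat.dvd_add hd dvd_rfl; rwa [Nat.sub_add_cancel h] at this
      by_cases hd : a ∣ n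
      · rw [if_pos hd, if_pos (this.mp hd)]; ring
      · rw [if_neg hd, if_neg (fun h2 => hd (this.mpr h2))]; ring
    · rw [if_neg h]
      have hd : ¬ a ∣ n := fun hd => h (Nat.le_of_dvd hn hd)
      rw [if_neg hd]; ring

lemma NN_inv (a : ℕ) (ha : 0 < a) : NN ((1 - (X : ℚ⟦X⟧) ^ a)⁻¹) := by
  rw [inv_eq_mk a ha]
  intro n; rw [coeff_mk]; split <;> norm_num

lemma NN_prod_inv (s : Finset ℕ) (f : ℕ → ℕ) (hf : ∀ l ∈ s, 0 < f l) :
    NN ((∏ l ∈ s, (1 - (X : ℚ⟦X⟧) ^ f l))⁻¹) := by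
  induction s using Finset.cons_induction with
  | empty =>
    rw [Finset.prod_empty]
    have : (1 : ℚ⟦X⟧)⁻¹ = 1 := by
      rw [eq_comm, PowerSeries.eq_inv_iff_mul_eq_one (by simp)]; rw [mul_one]
    rw [this]; exact NN_one
  | cons a s ha ih =>
    rw [Finset.prod_cons, PowerSeries.mul_inv_rev]
    exact (ih (fun l hl => hf l (Finset.mem_cons.2 (Or.inr hl)))).mul
      (NN_inv _ (hf a (Finset.mem_cons_self a s)))

theorem V_nonneg (x y r R m L i : ℕ) (hx : 0 < x) (hy : 0 < y)
    (hr : 0 < r) (hR : 0 < R) (hm : 0 < m) (hi : 1 ≤ i) (hiL : i ≤ L) (n : ℕ) :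
    0 ≤ PowerSeries.coeff (R := ℚ) n
      ((X : ℚ⟦X⟧) ^ (m * (i - 1) + y) * (1 - X ^ ((R - 1) * y)) * (1 - X ^ x) *
          (1 - X ^ (m * (i - 1) + r * x)) *
        ((∏ l ∈ range i, (1 - (X : ℚ⟦X⟧) ^ (x + l * m))) *
         (∏ l ∈ range i, (1 - (X : ℚ⟦X⟧) ^ (y + l * m))) *
         (∏ l ∈ range i, (1 - (X : ℚ⟦X⟧) ^ (r * x + R * y + l * m))))⁻¹ *
        ((∏ l ∈ range (L - i + 1), (1 - (X : ℚ⟦X⟧) ^ (m * (i - 1) + r * x + l * m))) *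
         (∏ l ∈ range (L - i + 1), (1 - (X : ℚ⟦X⟧) ^ (m * (i - 1) + R * y + l * m))) *
         (∏ l ∈ range (L - i + 1), (1 - (X : ℚ⟦X⟧) ^ (m * (i - 1) + x + y + l * m))))⁻¹) := by
  obtain ⟨i', rfl⟩ : ∃ i', i = i' + 1 := ⟨i - 1, (Nat.succ_pred_eq_of_pos hi).symm⟩
  have minv : ∀ f g : ℚ⟦X⟧, (f * g)⁻¹ = f⁻¹ * g⁻¹ := fun f g => by
    rw [PowerSeries.mul_inv_rev, mul_comm]
  simp only [Nat.add_sub_cancel, Finset.prod_range_succ', Nat.zero_mul, Nat.add_zero, minv]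
  set a := m * i' with ha
  -- cancellation facts
  have h1 : (1 - (X : ℚ⟦X⟧) ^ x) * (1 - X ^ x)⁻¹ = 1 := unit_cancel x hx
  have h3 : (1 - (X : ℚ⟦X⟧) ^ (a + r * x)) * (1 - X ^ (a + r * x))⁻¹ = 1 :=
    unit_cancel _ (by positivity)
  set S : ℚ⟦X⟧ := ∑ j ∈ range (R - 1), (X : ℚ⟦X⟧) ^ (y * j) with hSdef
  have hS : (1 - (X : ℚ⟦X⟧) ^ ((R - 1) * y)) * (1 - X ^ y)⁻¹ = S := by
    have hg : (1 : ℚ⟦X⟧) - X ^ ((R - 1) * y) = S * (1 - X ^ y) := by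
      have := geom_sum_mul ((X : ℚ⟦X⟧) ^ y) (R - 1)
      simp only [← pow_mul] at this
      rw [hSdef]
      rw [mul_comm (R-1) y]
      linear_combination this
    rw [hg, mul_assoc, unit_cancel y hy, mul_one]
  have hSnn : NN S := by
    intro k; rw [hSdef, map_sum]
    exact Finset.sum_nonneg fun j _ => NN_X_pow _ k
  -- name the remaining inverse factors
  have P1 : NN ((∏ l ∈ range i', (1 - (X : ℚ⟦X⟧) ^ (x + (l + 1) * m)))⁻¹) :=
    NN_prod_inv _ _ (fun l _ => by positivity)
  have P2 : NN ((∏ l ∈ range i', (1 - (X : ℚ⟦X⟧) ^ (y + (l + 1) * m)))⁻¹) :=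
    NN_prod_inv _ _ (fun l _ => by positivity)
  have P3 : NN ((∏ l ∈ range i', (1 - (X : ℚ⟦X⟧) ^ (r * x + R * y + (l + 1) * m)))⁻¹) :=
    NN_prod_inv _ _ (fun l _ => by positivity)
  have P3b : NN ((1 - (X : ℚ⟦X⟧) ^ (r * x + R * y))⁻¹) := NN_inv _ (by positivity)
  have Q1 : NN ((∏ l ∈ range (L - (i' + 1)), (1 - (X : ℚ⟦X⟧) ^ (a + r * x + (l + 1) * m)))⁻¹) :=
    NN_prod_inv _ _ (fun l _ => by positivity)
  have Q2 : NN ((∏ l ∈ range (L - (i' + 1)), (1 - (X : ℚ⟦X⟧) ^ (a + R * y + (l + 1) * m)))⁻¹) :=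
    NN_prod_inv _ _ (fun l _ => by positivity)
  have Q2b : NN ((1 - (X : ℚ⟦X⟧) ^ (a + R * y))⁻¹) := NN_inv _ (by positivity)
  have Q3 : NN ((∏ l ∈ range (L - (i' + 1)), (1 - (X : ℚ⟦X⟧) ^ (a + x + y + (l + 1) * m)))⁻¹) :=
    NN_prod_inv _ _ (fun l _ => by positivity)
  have Q3b : NN ((1 - (X : ℚ⟦X⟧) ^ (a + x + y))⁻¹) := NN_inv _ (by positivity)
  have key :
      (X : ℚ⟦X⟧) ^ (a + y) * (1 - X ^ ((R - 1) * y)) * (1 - X ^ x) * (1 - X ^ (a + r * x)) *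
        ((∏ l ∈ range i', (1 - (X : ℚ⟦X⟧) ^ (x + (l + 1) * m)))⁻¹ * (1 - X ^ x)⁻¹ *
         ((∏ l ∈ range i', (1 - (X : ℚ⟦X⟧) ^ (y + (l + 1) * m)))⁻¹ * (1 - X ^ y)⁻¹) *
         ((∏ l ∈ range i', (1 - (X : ℚ⟦X⟧) ^ (r * x + R * y + (l + 1) * m)))⁻¹ *
          (1 - X ^ (r * x + R * y))⁻¹)) *
        ((∏ l ∈ range (L - (i' + 1)), (1 - (X : ℚ⟦X⟧) ^ (a + r * x + (l + 1) * m)))⁻¹ *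
          (1 - X ^ (a + r * x))⁻¹ *
         ((∏ l ∈ range (L - (i' + 1)), (1 - (X : ℚ⟦X⟧) ^ (a + R * y + (l + 1) * m)))⁻¹ *
          (1 - X ^ (a + R * y))⁻¹) *
         ((∏ l ∈ range (L - (i' + 1)), (1 - (X : ℚ⟦X⟧) ^ (a + x + y + (l + 1) * m)))⁻¹ *
          (1 - X ^ (a + x + y))⁻¹)) =
      (X : ℚ⟦X⟧) ^ (a + y) * S *
        (∏ l ∈ range i', (1 - (X : ℚ⟦X⟧) ^ (x + (l + 1) * m)))⁻¹ *
        (∏ l ∈ range i', (1 - (X : ℚ⟦X⟧) ^ (y + (l + 1) * m)))⁻¹ *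
        ((∏ l ∈ range i', (1 - (X : ℚ⟦X⟧) ^ (r * x + R * y + (l + 1) * m)))⁻¹ *
         (1 - X ^ (r * x + R * y))⁻¹) *
        ((∏ l ∈ range (L - (i' + 1)), (1 - (X : ℚ⟦X⟧) ^ (a + r * x + (l + 1) * m)))⁻¹) *
        ((∏ l ∈ range (L - (i' + 1)), (1 - (X : ℚ⟦X⟧) ^ (a + R * y + (l + 1) * m)))⁻¹ *
         (1 - X ^ (a + R * y))⁻¹) *
        ((∏ l ∈ range (L - (i' + 1)), (1 - (X : ℚ⟦X⟧) ^ (a + x + y + (l + 1) * m)))⁻¹ *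
         (1 - X ^ (a + x + y))⁻¹) := by
    calc _ = ((1 - (X : ℚ⟦X⟧) ^ ((R - 1) * y)) * (1 - X ^ y)⁻¹) *
            ((1 - X ^ x) * (1 - X ^ x)⁻¹) *
            ((1 - X ^ (a + r * x)) * (1 - X ^ (a + r * x))⁻¹) *
            ((X : ℚ⟦X⟧) ^ (a + y) *
            (∏ l ∈ range i', (1 - (X : ℚ⟦X⟧) ^ (x + (l + 1) * m)))⁻¹ *
            (∏ l ∈ range i', (1 - (X : ℚ⟦X⟧) ^ (y + (l + 1) * m)))⁻¹ *
            ((∏ l ∈ range i', (1 - (X : ℚ⟦X⟧) ^ (r * x + R * y + (l + 1) * m)))⁻¹ *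
             (1 - X ^ (r * x + R * y))⁻¹) *
            ((∏ l ∈ range (L - (i' + 1)), (1 - (X : ℚ⟦X⟧) ^ (a + r * x + (l + 1) * m)))⁻¹) *
            ((∏ l ∈ range (L - (i' + 1)), (1 - (X : ℚ⟦X⟧) ^ (a + R * y + (l + 1) * m)))⁻¹ *
             (1 - X ^ (a + R * y))⁻¹) *
            ((∏ l ∈ range (L - (i' + 1)), (1 - (X : ℚ⟦X⟧) ^ (a + x + y + (l + 1) * m)))⁻¹ *
             (1 - X ^ (a + x + y))⁻¹)) := by ring
      _ = _ := by rw [hS, h1, h3]; ring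
  rw [key]
  exact ((((((((NN_X_pow (a + y)).mul hSnn).mul P1).mul P2).mul (P3.mul P3b)).mul
    Q1).mul (Q2.mul Q2b)).mul (Q3.mul Q3b)) n
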